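/- Lyapunov derivative estimate for a single patch: Let b ≥ 0, d^H > 0, v ≥ 0, ε ≥ 0, γ ≥ 0, δ ≥ 0, ζ > 0, d^C > 0, β^I ≥ 0, β^W ≥ 0. Set b* = b(1 + ε/d^H) and f = ((v + d^H)(γ + δ + d^H) − β^I b*) / (ζ (v + d^H)). Then for all real S, I, W with S ≥ 0, I ≥ 0, W ≥ 0 and S ≤ b*/(v + d^H), one has (β^I I + β^W W)S − (γ + δ + d^H)I + f(ζ I − d^C W) ≤ (β^W b*/(v + d^H) − d^C f)·W. Moreover β^W b*/(v + d^H) − d^C f = (d^C(γ + δ + d^H)/ζ) · ( b*(d^C β^I + ζ β^W) / (d^C (v + d^H)(γ + δ + d^H)) − 1 ); in particular the right-hand side is nonpositive whenever b*(d^C β^I + ζ β^W) ≤ d^C (v + d^H)(γ + δ + d^H) and W ≥ 0. -/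

import Mathlib

/-- Lyapunov derivative estimate for a single patch of the cholera model. -/
theorem cholera_single_patch_lyapunov_derivative_estimate
    (b dH v ε γ δ ζ dC βI βW : ℝ)
    (hb : 0 ≤ b) (hdH : 0 < dH) (hv : 0 ≤ v) (hε : 0 ≤ ε) (hγ : 0 ≤ γ)
    (hδ : 0 ≤ δ) (hζ : 0 < ζ) (hdC : 0 < dC) (hβI : 0 ≤ βI) (hβW : 0 ≤ βW) :
    let bstar : ℝ := b * (1 + ε / dH)
    let f : ℝ := ((v + dH) * (γ + δ + dH) - βI * bstar) / (ζ * (v + dH))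
    (∀ S I W : ℝ, 0 ≤ S → 0 ≤ I → 0 ≤ W → S ≤ bstar / (v + dH) →
      (βI * I + βW * W) * S - (γ + δ + dH) * I + f * (ζ * I - dC * W) ≤
        (βW * bstar / (v + dH) - dC * f) * W) ∧
    βW * bstar / (v + dH) - dC * f =
      (dC * (γ + δ + dH) / ζ) *
        (bstar * (dC * βI + ζ * βW) / (dC * (v + dH) * (γ + δ + dH)) - 1) ∧
    (∀ W : ℝ, 0 ≤ W →
      bstar * (dC * βI + ζ * βW) ≤ dC * (v + dH) * (γ + δ + dH) →
      (βW * bstar / (v + dH) - dC * f) * W ≤ 0) := by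
  intro bstar f
  have hvdH : 0 < v + dH := by linarith
  have hΓ : 0 < γ + δ + dH := by linarith
  have hfζ : f * ζ = (γ + δ + dH) - βI * bstar / (v + dH) := by
    simp only [f]; field_simp
  refine ⟨?_, ?_, ?_⟩
  · intro S I W hS hI hW hSle
    have h1 : βI * I * S ≤ βI * I * (bstar / (v + dH)) := by
      apply mul_le_mul_of_nonneg_left hSle (by positivity)
    have h2 : βW * W * S ≤ βW * W * (bstar / (v + dH)) := by
      apply mul_le_mul_of_nonneg_left hSle (by positivity)
    have key : (βI * I + βW * W) * S - (γ + δ + dH) * I + f * (ζ * I - dC * W)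
        ≤ βI * I * (bstar / (v + dH)) + βW * W * (bstar / (v + dH))
          - (γ + δ + dH) * I + f * ζ * I - f * dC * W := by nlinarith
    calc (βI * I + βW * W) * S - (γ + δ + dH) * I + f * (ζ * I - dC * W)
        ≤ βI * I * (bstar / (v + dH)) + βW * W * (bstar / (v + dH))
          - (γ + δ + dH) * I + f * ζ * I - f * dC * W := key
      _ = (βW * bstar / (v + dH) - dC * f) * W := by
          rw [hfζ]; ring
  · show βW * bstar / (v + dH) - dC * f = _
    simp only [f]; field_simp
    ring
  · intro W hW hcond
    apply mul_nonpos_of_nonpos_of_nonneg _ hW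
    have : βW * bstar / (v + dH) - dC * f
        = (bstar * (dC * βI + ζ * βW) - dC * ((v + dH) * (γ + δ + dH))) / (ζ * (v + dH)) := by
      simp only [f]; field_simp
      ring
    rw [this]
    apply div_nonpos_of_nonpos_of_nonneg
    · nlinarith
    · positivity
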